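/- arXiv:1606.07589 — 2 statements merged into one kernel-verified Lean document; each statement's English description precedes it below -/
import Mathlib

section
/- Let G be a group in which every element has order dividing 4 and suppose g, h ∈ G satisfy g⁴ = 1, h² = 1, (h, g²) = 1 and (gh)⁴ = 1 with (gh)² = (hg)² ≠ 1. Then the subgroup ⟨g, h⟩ has order dividing 16. -/
/-- In a group of exponent dividing 4, if g⁴ = 1, h² = 1, (h, g²) = 1,
(gh)⁴ = 1 and (gh)² = (hg)² ≠ 1, then ⟨g, h⟩ has order dividing 16. -/
theorem subgroup_order_dvd_sixteen {G : Type*} [Group G]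
    (hexp : ∀ x : G, x ^ 4 = 1) (g h : G)
    (hg : g ^ 4 = 1) (hh : h ^ 2 = 1)
    (hcomm : h⁻¹ * (g ^ 2)⁻¹ * h * g ^ 2 = 1)
    (hgh4 : (g * h) ^ 4 = 1)
    (hgh2 : (g * h) ^ 2 = (h * g) ^ 2)
    (hne : (g * h) ^ 2 ≠ 1) :
    Nat.card (Subgroup.closure {g, h}) ∣ 16 := by
  classical
  have hz2' : ((g * h) ^ 2) ^ 2 = 1 := by rw [← pow_mul]; exact hgh4
  obtain ⟨z, hzdef⟩ : ∃ z, (g * h) ^ 2 = z := ⟨_, rfl⟩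
  rw [hzdef] at hz2'
  have hh1 : h * h = 1 := by rw [← pow_two]; exact hh
  have hg4 : g ^ 3 * g = 1 := by rw [← pow_succ]; exact hg
  have hcgz : Commute g z := by
    show g * z = z * g
    rw [← hzdef]
    conv_lhs => rw [hgh2]
    simp [pow_two, mul_assoc]
  have hchz : Commute h z := by
    show h * z = z * h
    rw [← hzdef]
    conv_rhs => rw [hgh2]
    simp [pow_two, mul_assoc]
  have hginv : g⁻¹ = g ^ 3 := by
    apply inv_eq_of_mul_eq_one_right
    rw [← pow_succ']; exact hg
  have hhinv : h⁻¹ = h := inv_eq_of_mul_eq_one_right hh1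
  have hzinv : z⁻¹ = z := by
    apply inv_eq_of_mul_eq_one_right
    rw [← pow_two]; exact hz2'
  have hkey : h * g = g ^ 3 * z * h :=
    calc h * g = (g ^ 3 * g) * (h * g) * (h * h) := by rw [hg4, hh1]; group
      _ = g ^ 3 * (g * h * (g * h)) * h := by group
      _ = g ^ 3 * z * h := by rw [← hzdef, pow_two]
  have hkeyn : ∀ c : ℕ, h * g ^ c = g ^ (3 * c) * z ^ c * h := by
    intro c
    induction c with
    | zero => simp
    | succ c ih =>
      calc h * g ^ (c + 1) = (h * g ^ c) * g := by rw [pow_succ, mul_assoc]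
        _ = g ^ (3 * c) * z ^ c * (h * g) := by rw [ih]; group
        _ = g ^ (3 * c) * z ^ c * (g ^ 3 * z * h) := by rw [hkey]
        _ = g ^ (3 * c) * (z ^ c * g ^ 3) * z * h := by group
        _ = g ^ (3 * c) * (g ^ 3 * z ^ c) * z * h := by
            rw [(hcgz.symm.pow_pow c 3).eq]
        _ = g ^ (3 * (c + 1)) * z ^ (c + 1) * h := by
            rw [Nat.mul_add, Nat.mul_one, pow_add, pow_succ]; group
  have hredg : ∀ i : ℕ, g ^ i = g ^ (i % 4) := by
    intro i
    conv_lhs => rw [← Nat.div_add_mod i 4]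
    rw [pow_add, pow_mul, hg, one_pow, one_mul]
  have hredh : ∀ b : ℕ, h ^ b = h ^ (b % 2) := by
    intro b
    conv_lhs => rw [← Nat.div_add_mod b 2]
    rw [pow_add, pow_mul, hh, one_pow, one_mul]
  have hredz : ∀ e : ℕ, z ^ e = z ^ (e % 2) := by
    intro e
    conv_lhs => rw [← Nat.div_add_mod e 2]
    rw [pow_add, pow_mul, hz2', one_pow, one_mul]
  set P : G → Prop := fun x => ∃ i e b : ℕ, x = g ^ i * z ^ e * h ^ b with hP
  have Pmul : ∀ x y, P x → P y → P (x * y) := by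
    rintro x y ⟨i, e, b, rfl⟩ ⟨c, f, d, rfl⟩
    rw [hredh b]
    rcases Nat.mod_two_eq_zero_or_one b with hb | hb <;> rw [hb]
    · refine ⟨i + c, e + f, d, ?_⟩
      rw [pow_zero, mul_one]
      calc g ^ i * z ^ e * (g ^ c * z ^ f * h ^ d)
          = g ^ i * (z ^ e * g ^ c) * z ^ f * h ^ d := by group
        _ = g ^ i * (g ^ c * z ^ e) * z ^ f * h ^ d := by
            rw [(hcgz.symm.pow_pow e c).eq]
        _ = g ^ (i + c) * z ^ (e + f) * h ^ d := by rw [pow_add, pow_add]; group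
    · refine ⟨i + 3 * c, e + c + f, 1 + d, ?_⟩
      rw [pow_one]
      calc g ^ i * z ^ e * h * (g ^ c * z ^ f * h ^ d)
          = g ^ i * z ^ e * (h * g ^ c) * z ^ f * h ^ d := by group
        _ = g ^ i * z ^ e * (g ^ (3 * c) * z ^ c * h) * z ^ f * h ^ d := by rw [hkeyn]
        _ = g ^ i * (z ^ e * g ^ (3 * c)) * z ^ c * (h * z ^ f) * h ^ d := by group
        _ = g ^ i * (g ^ (3 * c) * z ^ e) * z ^ c * (z ^ f * h) * h ^ d := by
            rw [(hcgz.symm.pow_pow e (3 * c)).eq, (hchz.pow_right f).eq]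
        _ = g ^ (i + 3 * c) * z ^ (e + c + f) * h ^ (1 + d) := by
            rw [pow_add, pow_add, pow_add, pow_add, pow_one]; group
  have Pinv : ∀ x, P x → P x⁻¹ := by
    rintro x ⟨i, e, b, rfl⟩
    have h1 : (g ^ i * z ^ e * h ^ b)⁻¹ = (h ^ b)⁻¹ * ((z ^ e)⁻¹ * (g ^ i)⁻¹) := by group
    have h2 : (h ^ b)⁻¹ = h ^ b := by rw [← inv_pow, hhinv]
    have h3 : (z ^ e)⁻¹ = z ^ e := by rw [← inv_pow, hzinv]
    have h4 : (g ^ i)⁻¹ = g ^ (3 * i) := by rw [← inv_pow, hginv, ← pow_mul]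
    have hx : (g ^ i * z ^ e * h ^ b)⁻¹ =
        (g ^ 0 * z ^ 0 * h ^ b) * (g ^ (3 * i) * z ^ e * h ^ 0) := by
      rw [h1, h2, h3, h4]
      simp only [pow_zero, one_mul, mul_one]
      rw [(hcgz.symm.pow_pow e (3 * i)).eq]
    rw [hx]
    exact Pmul _ _ ⟨0, 0, b, rfl⟩ ⟨3 * i, e, 0, rfl⟩
  have hPall : ∀ x ∈ Subgroup.closure ({g, h} : Set G), P x := by
    intro x hx
    refine Subgroup.closure_induction ?_ ⟨0, 0, 0, by simp⟩ (fun a b _ _ => Pmul a b)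
      (fun a _ => Pinv a) hx
    rintro y (rfl | rfl)
    · exact ⟨1, 0, 0, by simp⟩
    · exact ⟨0, 0, 1, by simp⟩
  set T : Finset G := (Finset.range 4 ×ˢ Finset.range 2 ×ˢ Finset.range 2).image
      (fun p => g ^ p.1 * z ^ p.2.1 * h ^ p.2.2) with hT
  have hsub : (Subgroup.closure ({g, h} : Set G) : Set G) ⊆ ↑T := by
    intro x hx
    obtain ⟨i, e, b, rfl⟩ := hPall x hx
    rw [hredg i, hredz e, hredh b]
    simp only [hT, Finset.coe_image, Set.mem_image, Finset.mem_coe, Finset.mem_product,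
      Finset.mem_range]
    exact ⟨(i % 4, e % 2, b % 2), ⟨Nat.mod_lt _ (by norm_num),
      Nat.mod_lt _ (by norm_num), Nat.mod_lt _ (by norm_num)⟩, rfl⟩
  have hfin : (Subgroup.closure ({g, h} : Set G) : Set G).Finite :=
    Set.Finite.subset T.finite_toSet hsub
  have : Finite (Subgroup.closure ({g, h} : Set G)) := hfin.to_subtype
  have hcardle : Nat.card (Subgroup.closure ({g, h} : Set G)) ≤ 16 := by
    have h1 : Nat.card (Subgroup.closure ({g, h} : Set G)) =
        (Subgroup.closure ({g, h} : Set G) : Set G).ncard := Nat.card_coe_set_eq _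
    rw [h1]
    calc (Subgroup.closure ({g, h} : Set G) : Set G).ncard
        ≤ (↑T : Set G).ncard := Set.ncard_le_ncard hsub T.finite_toSet
      _ = T.card := by rw [Set.ncard_coe_finset]
      _ ≤ (Finset.range 4 ×ˢ Finset.range 2 ×ˢ Finset.range 2).card := by
          rw [hT]; exact Finset.card_image_le
      _ = 16 := by simp
  have hp : IsPGroup 2 (Subgroup.closure ({g, h} : Set G)) := by
    intro x
    refine ⟨2, ?_⟩
    ext
    push_cast
    exact hexp _
  obtain ⟨n, hn⟩ := IsPGroup.iff_card.mp hp
  rw [hn] at hcardle ⊢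
  have hn4 : n ≤ 4 := by
    by_contra hlt
    push_neg at hlt
    have : 2 ^ 5 ≤ 2 ^ n := Nat.pow_le_pow_right (by norm_num) hlt
    omega
  calc (2 : ℕ) ^ n ∣ 2 ^ 4 := pow_dvd_pow 2 hn4
    _ = 16 := by norm_num
end

section
/- Let F be a field of characteristic 2 and G a finite 2-group such that the Frattini subgroup Φ(G) is central elementary abelian, G' ⊆ Φ(G), and |G'| ≤ 4. Then every normalized unit u of FG (unit with augmentation 1) satisfies u⁴ = 1. -/
/-- The augmentation map of a group algebra: the algebra homomorphism
FG → F sending every group element to 1. -/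
noncomputable def augmentation (F G : Type*) [Field F] [Group G] :
    MonoidAlgebra F G →ₐ[F] F :=
  MonoidAlgebra.lift F F G 1

section GroupAux

open Subgroup

lemma sq_mem_frattini {G : Type*} [Group G] [Finite G] (hp : IsPGroup 2 G) (g : G) :
    g ^ 2 ∈ frattini G := by
  haveI : Fact (Nat.Prime 2) := ⟨Nat.prime_two⟩
  haveI : Group.IsNilpotent G := hp.isNilpotent
  have key : ∀ M : Subgroup G, IsCoatom M → g ^ 2 ∈ M := by
    intro M hM
    haveI : M.Normal :=
      Subgroup.NormalizerCondition.normal_of_coatom M normalizerCondition_of_isNilpotent hM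
    have hQp : IsPGroup 2 (G ⧸ M) := hp.to_quotient M
    have hQnt : Nontrivial (G ⧸ M) := by
      obtain ⟨x, hx⟩ := (not_forall.mp (fun h => hM.1 ((eq_top_iff' M).mpr h)))
      exact ⟨⟨QuotientGroup.mk x, 1, by simpa [QuotientGroup.eq_one_iff] using hx⟩⟩
    have hsub : ∀ K : Subgroup (G ⧸ M), K = ⊥ ∨ K = ⊤ := by
      intro K
      have hle : M ≤ K.comap (QuotientGroup.mk' M) := by
        intro m hm
        have h1 : ((m : G ⧸ M)) = 1 := (QuotientGroup.eq_one_iff m).mpr hm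
        simp only [Subgroup.mem_comap, QuotientGroup.mk'_apply, h1]
        exact one_mem K
      rcases eq_or_lt_of_le hle with h | h
      · left
        have := Subgroup.map_comap_eq_self_of_surjective
          (QuotientGroup.mk'_surjective M) K
        rw [← this, ← h]
        rw [Subgroup.map_eq_bot_iff]
        simp [QuotientGroup.ker_mk']
      · right
        have := hM.2 _ h
        have h2 := Subgroup.map_comap_eq_self_of_surjective
          (QuotientGroup.mk'_surjective M) K
        rw [← h2, ‹K.comap (QuotientGroup.mk' M) = ⊤›]
        exact Subgroup.map_top_of_surjective _ (QuotientGroup.mk'_surjective M)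
    have hdvd : 2 ∣ Nat.card (G ⧸ M) := by
      obtain ⟨n, hn⟩ := IsPGroup.iff_card.mp hQp
      rcases n with _ | n
      · simp at hn
        exact absurd (Nat.card_eq_one_iff_unique.mp hn).1 (not_subsingleton _)
      · exact hn ▸ dvd_pow_self 2 n.succ_ne_zero
    obtain ⟨y, hy⟩ := exists_prime_orderOf_dvd_card' (G := G ⧸ M) 2 hdvd
    have hzy : Subgroup.zpowers y = ⊤ := by
      rcases hsub (Subgroup.zpowers y) with h | h
      · exfalso
        have : y = 1 := by simpa [h] using Subgroup.mem_zpowers y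
        rw [this, orderOf_one] at hy
        norm_num at hy
      · exact h
    have hcard : Nat.card (G ⧸ M) = 2 := by
      rw [← hy, ← Nat.card_zpowers, hzy, Subgroup.card_top]
    have : (QuotientGroup.mk g : G ⧸ M) ^ 2 = 1 := by
      rw [← hcard]
      exact pow_card_eq_one'
    rwa [← QuotientGroup.mk_pow, QuotientGroup.eq_one_iff] at this
  have hfr : frattini G = ⨅ a ∈ {H : Subgroup G | IsCoatom H}, a := rfl
  rw [hfr]
  simp only [Subgroup.mem_iInf, Set.mem_setOf_eq]
  exact key

/-- Pigeonhole: in a subgroup of order at most 4 whose elements square to one,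
any three elements satisfy one of seven relations. -/
lemma rel7 {G : Type*} [Group G] [Finite G] {a b c : G}
    (ha : a ∈ commutator G) (hb : b ∈ commutator G) (hc : c ∈ commutator G)
    (hsq : ∀ x ∈ commutator G, x ^ 2 = 1)
    (hcard : Nat.card (commutator G) ≤ 4) :
    a = 1 ∨ b = 1 ∨ c = 1 ∨ b = a ∨ c = a ∨ c = b ∨ c = a * b := by
  by_contra hcon
  push_neg at hcon
  obtain ⟨h1, h2, h3, h4, h5, h6, h7⟩ := hcon
  have hainv : a⁻¹ = a := by
    have := hsq a ha
    rw [sq] at this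
    exact inv_eq_of_mul_eq_one_right this
  haveI : DecidableEq G := Classical.decEq G
  have n1ab : (1 : G) ≠ a * b :=
    fun h => h4 ((eq_inv_of_mul_eq_one_right h.symm).trans hainv)
  have naab : a ≠ a * b := fun h => h2 (mul_left_cancel (by rw [← h, mul_one])).symm
  have nbab : b ≠ a * b := fun h => h1 (by
    have : 1 * b = a * b := by rwa [one_mul]
    exact (mul_right_cancel this).symm)
  let T : Finset G := {1, a, b, a * b, c}
  have hTcard : T.card = 5 := by
    rw [show T = insert 1 (insert a (insert b (insert (a * b) {c}))) from rfl]
    rw [Finset.card_insert_of_notMem (by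
      simp only [Finset.mem_insert, Finset.mem_singleton]
      push_neg
      exact ⟨Ne.symm h1, Ne.symm h2, n1ab, Ne.symm h3⟩)]
    rw [Finset.card_insert_of_notMem (by
      simp only [Finset.mem_insert, Finset.mem_singleton]
      push_neg
      exact ⟨Ne.symm h4, naab, Ne.symm h5⟩)]
    rw [Finset.card_insert_of_notMem (by
      simp only [Finset.mem_insert, Finset.mem_singleton]
      push_neg
      exact ⟨nbab, Ne.symm h6⟩)]
    rw [Finset.card_insert_of_notMem (by
      simp only [Finset.mem_singleton]
      exact Ne.symm h7)]
    rw [Finset.card_singleton]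
  have hsubset : (T : Set G) ⊆ (commutator G : Set G) := by
    intro x hx
    simp only [T, Finset.coe_insert, Set.mem_insert_iff, Finset.coe_singleton,
      Set.mem_singleton_iff] at hx
    rcases hx with rfl | rfl | rfl | rfl | rfl
    · exact one_mem _
    · exact ha
    · exact hb
    · exact mul_mem ha hb
    · exact hc
  have hle : T.card ≤ Nat.card (commutator G) := by
    have e1 : Nat.card (commutator G) = (commutator G : Set G).ncard := by
      rw [← SetLike.coe_sort_coe, Nat.card_coe_set_eq]
    rw [e1, ← Set.ncard_coe_finset T]
    exact Set.ncard_le_ncard hsubset (Set.toFinite _)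
  omega

end GroupAux

section AlgebraAux

variable {F : Type*} [Field F] {G : Type*} [Group G]

open scoped commutatorElement

local notation "κ" => MonoidAlgebra.of F G

lemma char2_add_self (hF : (2 : F) = 0) (x : MonoidAlgebra F G) : x + x = 0 := by
  rw [← two_smul F x, hF, zero_smul]

lemma central_commute {c : G} (hc : c ∈ Subgroup.center G) (x : MonoidAlgebra F G) :
    κ c * x = x * κ c := by
  induction x using MonoidAlgebra.induction_on with
  | of g => rw [← map_mul, ← Subgroup.mem_center_iff.mp hc g, map_mul]
  | add f g hf hg => rw [mul_add, add_mul, hf, hg]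
  | smul r f hf => rw [mul_smul_comm, smul_mul_assoc, hf]

lemma oneadd_comm {c : G} (hc : c ∈ Subgroup.center G) (x : MonoidAlgebra F G) :
    (1 + κ c) * x = x * (1 + κ c) := by
  rw [add_mul, mul_add, one_mul, mul_one, central_commute hc]

lemma oneadd_sq (hF : (2 : F) = 0) {c : G} (h1 : c ^ 2 = 1) :
    (1 + κ c) * (1 + κ c) = 0 := by
  have hcc : κ c * κ c = 1 := by rw [← map_mul, ← sq, h1, map_one]
  calc (1 + κ c) * (1 + κ c) = (1 + 1) + (κ c + κ c) := by
        rw [mul_add, add_mul, add_mul, one_mul, one_mul, mul_one, hcc]; abel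
    _ = 0 := by rw [char2_add_self hF, char2_add_self hF, add_zero]

/-- The span of the elements `g (1 + c)` for `c` in the commutator subgroup. -/
noncomputable def comI (F : Type*) [Field F] (G : Type*) [Group G] : Submodule F (MonoidAlgebra F G) :=
  Submodule.span F {x | ∃ g c : G, c ∈ commutator G ∧
    x = MonoidAlgebra.of F G g * (1 + MonoidAlgebra.of F G c)}

lemma mul_oneadd_mem {c : G} (hc : c ∈ commutator G) (x : MonoidAlgebra F G) :
    x * (1 + κ c) ∈ comI F G := by
  induction x using MonoidAlgebra.induction_on with
  | of g => exact Submodule.subset_span ⟨g, c, hc, rfl⟩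
  | add f g hf hg => rw [add_mul]; exact add_mem hf hg
  | smul r f hf => rw [smul_mul_assoc]; exact Submodule.smul_mem _ _ hf

lemma comI_mul_left {x : MonoidAlgebra F G} (hx : x ∈ comI F G) (r : MonoidAlgebra F G) :
    r * x ∈ comI F G := by
  induction r using MonoidAlgebra.induction_on with
  | of h =>
    induction hx using Submodule.span_induction with
    | mem y hy =>
      obtain ⟨g, c, hc, rfl⟩ := hy
      rw [← mul_assoc, ← map_mul]
      exact Submodule.subset_span ⟨h * g, c, hc, rfl⟩
    | zero => rw [mul_zero]; exact zero_mem _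
    | add y z _ _ hy hz => rw [mul_add]; exact add_mem hy hz
    | smul a y _ hy => rw [mul_smul_comm]; exact Submodule.smul_mem _ _ hy
  | add f g hf hg => rw [add_mul]; exact add_mem hf hg
  | smul a f hf => rw [smul_mul_assoc]; exact Submodule.smul_mem _ _ hf

lemma comI_mul_right (hcc : commutator G ≤ Subgroup.center G)
    {x : MonoidAlgebra F G} (hx : x ∈ comI F G) (r : MonoidAlgebra F G) :
    x * r ∈ comI F G := by
  induction hx using Submodule.span_induction with
  | mem y hy =>
    obtain ⟨g, c, hc, rfl⟩ := hy
    rw [mul_assoc, oneadd_comm (hcc hc), ← mul_assoc]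
    exact mul_oneadd_mem hc _
  | zero => rw [zero_mul]; exact zero_mem _
  | add y z _ _ hy hz => rw [add_mul]; exact add_mem hy hz
  | smul a y _ hy => rw [smul_mul_assoc]; exact Submodule.smul_mem _ _ hy

lemma swap_mem (x y : MonoidAlgebra F G) : x * y + y * x ∈ comI F G := by
  induction x using MonoidAlgebra.induction_on with
  | of g =>
    induction y using MonoidAlgebra.induction_on with
    | of h =>
      have hc : h⁻¹ * g⁻¹ * h * g ∈ commutator G := by
        have : h⁻¹ * g⁻¹ * h * g = ⁅h⁻¹, g⁻¹⁆ := by group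
        rw [this, commutator_def]
        exact Subgroup.commutator_mem_commutator (Subgroup.mem_top _) (Subgroup.mem_top _)
      have key : κ g * κ h + κ h * κ g = κ (g * h) * (1 + κ (h⁻¹ * g⁻¹ * h * g)) := by
        rw [mul_add, mul_one, ← map_mul, ← map_mul, ← map_mul]
        congr 2
        group
      rw [key]
      exact Submodule.subset_span ⟨g * h, _, hc, rfl⟩
    | add f₁ f₂ h1 h2 =>
      have : κ g * (f₁ + f₂) + (f₁ + f₂) * κ g
          = (κ g * f₁ + f₁ * κ g) + (κ g * f₂ + f₂ * κ g) := by
        rw [mul_add, add_mul]; abel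
      rw [this]; exact add_mem h1 h2
    | smul r f hf =>
      have : κ g * (r • f) + (r • f) * κ g = r • (κ g * f + f * κ g) := by
        rw [mul_smul_comm, smul_mul_assoc, smul_add]
      rw [this]; exact Submodule.smul_mem _ _ hf
  | add f₁ f₂ h1 h2 =>
    have : (f₁ + f₂) * y + y * (f₁ + f₂)
        = (f₁ * y + y * f₁) + (f₂ * y + y * f₂) := by
      rw [mul_add, add_mul]; abel
    rw [this]; exact add_mem h1 h2
  | smul r f hf =>
    have : (r • f) * y + y * (r • f) = r • (f * y + y * f) := by
      rw [mul_smul_comm, smul_mul_assoc, smul_add]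
    rw [this]; exact Submodule.smul_mem _ _ hf

lemma triple_zero (hF : (2 : F) = 0) [Finite G]
    (hcc : commutator G ≤ Subgroup.center G)
    (hsq : ∀ x ∈ commutator G, x ^ 2 = 1)
    (hcard : Nat.card (commutator G) ≤ 4)
    {a b c : G} (ha : a ∈ commutator G) (hb : b ∈ commutator G) (hc : c ∈ commutator G) :
    (1 + κ a) * (1 + κ b) * (1 + κ c) = 0 := by
  rcases rel7 ha hb hc hsq hcard with h | h | h | h | h | h | h
  · subst h; rw [map_one, char2_add_self hF 1, zero_mul, zero_mul]
  · subst h; rw [map_one, char2_add_self hF 1, mul_zero, zero_mul]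
  · subst h; rw [map_one, char2_add_self hF 1, mul_zero]
  · subst h; rw [oneadd_sq hF (hsq b hb), zero_mul]
  · subst h; rw [mul_assoc, ← oneadd_comm (hcc hc), ← mul_assoc, oneadd_sq hF (hsq c hc),
      zero_mul]
  · subst h; rw [mul_assoc, oneadd_sq hF (hsq c hc), mul_zero]
  · subst h
    have hb1 : κ b * κ b = 1 := by rw [← map_mul, ← sq, hsq b hb, map_one]
    have hba : κ b * (κ a * κ b) = κ a := by
      rw [← mul_assoc, ← central_commute (hcc ha) (κ b), mul_assoc, hb1, mul_one]
    have key : (1 + κ b) * (1 + κ (a * b)) = (1 + κ a) * (1 + κ b) := by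
      rw [map_mul]
      calc (1 + κ b) * (1 + κ a * κ b)
          = 1 * (1 + κ a * κ b) + κ b * (1 + κ a * κ b) := add_mul _ _ _
        _ = (1 + κ a * κ b) + (κ b + κ b * (κ a * κ b)) := by rw [one_mul, mul_add, mul_one]
        _ = (1 + κ a * κ b) + (κ b + κ a) := by rw [hba]
        _ = 1 * (1 + κ b) + κ a * (1 + κ b) := by rw [one_mul, mul_add, mul_one]; abel
        _ = (1 + κ a) * (1 + κ b) := (add_mul _ _ _).symm
    calc (1 + κ a) * (1 + κ b) * (1 + κ (a * b))
        = (1 + κ a) * ((1 + κ b) * (1 + κ (a * b))) := mul_assoc _ _ _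
      _ = (1 + κ a) * ((1 + κ a) * (1 + κ b)) := by rw [key]
      _ = ((1 + κ a) * (1 + κ a)) * (1 + κ b) := (mul_assoc _ _ _).symm
      _ = 0 := by rw [oneadd_sq hF (hsq a ha), zero_mul]

lemma comI_anticomm_gen (hF : (2 : F) = 0) [Finite G]
    (hcc : commutator G ≤ Subgroup.center G)
    (hsq : ∀ x ∈ commutator G, x ^ 2 = 1)
    (hcard : Nat.card (commutator G) ≤ 4)
    (g a : G) (haC : a ∈ commutator G) {y : MonoidAlgebra F G} (hy : y ∈ comI F G) :
    (κ g * (1 + κ a)) * y + y * (κ g * (1 + κ a)) = 0 := by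
  induction hy using Submodule.span_induction with
  | mem v hv =>
    obtain ⟨h, b, hbC, rfl⟩ := hv
    have hc₀ : h⁻¹ * g⁻¹ * h * g ∈ commutator G := by
      have : h⁻¹ * g⁻¹ * h * g = ⁅h⁻¹, g⁻¹⁆ := by group
      rw [this, commutator_def]
      exact Subgroup.commutator_mem_commutator (Subgroup.mem_top _) (Subgroup.mem_top _)
    have hcomm1 : Commute (1 + κ a) (κ h) := oneadd_comm (hcc haC) (κ h)
    have hcomm2 : Commute (1 + κ b) (κ g) := oneadd_comm (hcc hbC) (κ g)
    have e1 : (κ g * (1 + κ a)) * (κ h * (1 + κ b))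
        = (κ g * κ h) * ((1 + κ a) * (1 + κ b)) := hcomm1.mul_mul_mul_comm (κ g) (1 + κ b)
    have e2 : (κ h * (1 + κ b)) * (κ g * (1 + κ a))
        = (κ h * κ g) * ((1 + κ b) * (1 + κ a)) := hcomm2.mul_mul_mul_comm (κ h) (1 + κ a)
    have e3 : (1 + κ b) * (1 + κ a) = (1 + κ a) * (1 + κ b) :=
      (oneadd_comm (hcc haC) (1 + κ b)).symm
    have e4 : κ h * κ g = κ (g * h) * κ (h⁻¹ * g⁻¹ * h * g) := by
      rw [← map_mul, ← map_mul]
      congr 1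
      group
    calc (κ g * (1 + κ a)) * (κ h * (1 + κ b)) + (κ h * (1 + κ b)) * (κ g * (1 + κ a))
        = (κ g * κ h) * ((1 + κ a) * (1 + κ b))
            + (κ h * κ g) * ((1 + κ a) * (1 + κ b)) := by rw [e1, e2, e3]
      _ = κ (g * h) * ((1 + κ a) * (1 + κ b))
            + κ (g * h) * (κ (h⁻¹ * g⁻¹ * h * g) * ((1 + κ a) * (1 + κ b))) := by
            rw [← map_mul, e4, mul_assoc]
      _ = κ (g * h) * ((1 + κ (h⁻¹ * g⁻¹ * h * g)) * ((1 + κ a) * (1 + κ b))) := by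
            rw [← mul_add (κ (g * h)), show (1 + κ a) * (1 + κ b)
                + κ (h⁻¹ * g⁻¹ * h * g) * ((1 + κ a) * (1 + κ b))
                = (1 + κ (h⁻¹ * g⁻¹ * h * g)) * ((1 + κ a) * (1 + κ b)) from by
              rw [add_mul 1 (κ (h⁻¹ * g⁻¹ * h * g)) ((1 + κ a) * (1 + κ b)), one_mul]]
      _ = κ (g * h) * ((1 + κ (h⁻¹ * g⁻¹ * h * g)) * (1 + κ a) * (1 + κ b)) := by
            rw [show (1 + κ (h⁻¹ * g⁻¹ * h * g)) * ((1 + κ a) * (1 + κ b))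
              = (1 + κ (h⁻¹ * g⁻¹ * h * g)) * (1 + κ a) * (1 + κ b) from (mul_assoc _ _ _).symm]
      _ = 0 := by rw [triple_zero hF hcc hsq hcard hc₀ haC hbC, mul_zero]
  | zero => rw [mul_zero, zero_mul, add_zero]
  | add v w _ _ ihv ihw =>
    have expand : (κ g * (1 + κ a)) * (v + w) + (v + w) * (κ g * (1 + κ a))
        = ((κ g * (1 + κ a)) * v + v * (κ g * (1 + κ a)))
          + ((κ g * (1 + κ a)) * w + w * (κ g * (1 + κ a))) := by
      rw [mul_add, add_mul]; abel
    rw [expand, ihv, ihw, add_zero]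
  | smul r v _ ihv =>
    rw [mul_smul_comm, smul_mul_assoc, ← smul_add, ihv, smul_zero]

lemma comI_anticomm (hF : (2 : F) = 0) [Finite G]
    (hcc : commutator G ≤ Subgroup.center G)
    (hsq : ∀ x ∈ commutator G, x ^ 2 = 1)
    (hcard : Nat.card (commutator G) ≤ 4)
    {x y : MonoidAlgebra F G} (hx : x ∈ comI F G) (hy : y ∈ comI F G) :
    x * y + y * x = 0 := by
  induction hx using Submodule.span_induction with
  | mem v hv =>
    obtain ⟨g, a, haC, rfl⟩ := hv
    exact comI_anticomm_gen hF hcc hsq hcard g a haC hy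
  | zero => rw [zero_mul, mul_zero, add_zero]
  | add v w _ _ ihv ihw =>
    have expand : (v + w) * y + y * (v + w) = (v * y + y * v) + (w * y + y * w) := by
      rw [mul_add, add_mul]; abel
    rw [expand, ihv, ihw, add_zero]
  | smul r v _ ihv =>
    rw [smul_mul_assoc, mul_smul_comm, ← smul_add, ihv, smul_zero]

lemma comI_sq_zero (hF : (2 : F) = 0) [Finite G]
    (hcc : commutator G ≤ Subgroup.center G)
    (hsq : ∀ x ∈ commutator G, x ^ 2 = 1)
    (hcard : Nat.card (commutator G) ≤ 4)
    {x : MonoidAlgebra F G} (hx : x ∈ comI F G) :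
    x * x = 0 := by
  induction hx using Submodule.span_induction with
  | mem v hv =>
    obtain ⟨g, a, haC, rfl⟩ := hv
    have hcm : Commute (1 + κ a) (κ g) := oneadd_comm (hcc haC) (κ g)
    rw [hcm.mul_mul_mul_comm (κ g) (1 + κ a), oneadd_sq hF (hsq a haC), mul_zero]
  | zero => rw [mul_zero]
  | add v w hv hw ihv ihw =>
    have h1 : v * w + w * v = 0 := comI_anticomm hF hcc hsq hcard hv hw
    calc (v + w) * (v + w) = v * v + (v * w + w * v) + w * w := by
          rw [mul_add, add_mul, add_mul]; abel
      _ = 0 := by rw [ihv, ihw, h1]; simp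
  | smul r v _ ihv =>
    rw [smul_mul_assoc, mul_smul_comm, ihv, smul_zero, smul_zero]

lemma sq_decomp (hF : (2 : F) = 0) [Finite G] (hp : IsPGroup 2 G)
    (hfc : frattini G ≤ Subgroup.center G)
    (hfe : ∀ x ∈ frattini G, x ^ 2 = 1)
    (x : MonoidAlgebra F G) :
    ∃ z : MonoidAlgebra F G, (∀ w, z * w = w * z) ∧
      z * z = algebraMap F (MonoidAlgebra F G) ((augmentation F G x) ^ 4) ∧
      x * x + z ∈ comI F G := by
  have hF4 : ∀ s t : F, (s + t) ^ 4 = s ^ 4 + t ^ 4 := fun s t => by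
    linear_combination (2 * s ^ 3 * t + 3 * s ^ 2 * t ^ 2 + 2 * s * t ^ 3) * hF
  induction x using MonoidAlgebra.induction_on with
  | of g =>
    have hfr := sq_mem_frattini hp g
    have haug : augmentation F G (κ g) = 1 := by
      simp [augmentation, MonoidAlgebra.lift_of]
    refine ⟨κ (g ^ 2), fun w => central_commute (hfc hfr) w, ?_, ?_⟩
    · rw [← map_mul, ← sq, hfe _ hfr, map_one, haug, one_pow, map_one]
    · have h0 : κ g * κ g + κ (g ^ 2) = 0 := by
        rw [map_pow, sq, char2_add_self hF]
      rw [h0]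
      exact zero_mem _
  | add f₁ f₂ ih1 ih2 =>
    obtain ⟨z₁, hc1, hz1, hm1⟩ := ih1
    obtain ⟨z₂, hc2, hz2, hm2⟩ := ih2
    refine ⟨z₁ + z₂, ?_, ?_, ?_⟩
    · intro w; rw [add_mul, mul_add, hc1 w, hc2 w]
    · calc (z₁ + z₂) * (z₁ + z₂)
          = z₁ * z₁ + z₂ * z₂ + (z₁ * z₂ + z₁ * z₂) := by
            rw [mul_add, add_mul, add_mul, ← hc1 z₂]; abel
        _ = z₁ * z₁ + z₂ * z₂ := by rw [char2_add_self hF, add_zero]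
        _ = algebraMap F (MonoidAlgebra F G) ((augmentation F G (f₁ + f₂)) ^ 4) := by
            rw [hz1, hz2, ← map_add]
            congr 1
            rw [map_add, hF4]
    · have expand : (f₁ + f₂) * (f₁ + f₂) + (z₁ + z₂)
          = (f₁ * f₁ + z₁) + (f₂ * f₂ + z₂) + (f₁ * f₂ + f₂ * f₁) := by
        rw [mul_add, add_mul, add_mul]; abel
      rw [expand]
      exact add_mem (add_mem hm1 hm2) (swap_mem f₁ f₂)
  | smul r f ih =>
    obtain ⟨z, hc, hz, hm⟩ := ih
    refine ⟨(r * r) • z, ?_, ?_, ?_⟩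
    · intro w; rw [smul_mul_assoc, mul_smul_comm, hc w]
    · rw [smul_mul_assoc, mul_smul_comm, smul_smul, hz, Algebra.smul_def, ← map_mul]
      congr 1
      rw [map_smul, smul_eq_mul]
      ring
    · have expand : (r • f) * (r • f) + (r * r) • z = (r * r) • (f * f + z) := by
        rw [smul_mul_assoc, mul_smul_comm, smul_smul, smul_add]
      rw [expand]
      exact Submodule.smul_mem _ _ hm

end AlgebraAux

/-- Let char F = 2 and G a finite 2-group with Φ(G) central elementary abelian,
G' ⊆ Φ(G), and |G'| ≤ 4. Then every normalized unit u of FG satisfies u⁴ = 1. -/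
theorem normalized_units_exponent_four {F : Type*} [Field F] (hF : (2 : F) = 0)
    {G : Type*} [Group G] [Finite G] (hp : IsPGroup 2 G)
    (hfc : frattini G ≤ Subgroup.center G)
    (hfe : ∀ x ∈ frattini G, x ^ 2 = 1)
    (hG' : commutator G ≤ frattini G)
    (hcard : Nat.card (commutator G) ≤ 4) :
    ∀ u : MonoidAlgebra F G, IsUnit u → augmentation F G u = 1 → u ^ 4 = 1 := by
  intro u _ hu
  have hcc : commutator G ≤ Subgroup.center G := le_trans hG' hfc
  have hsqc : ∀ x ∈ commutator G, x ^ 2 = 1 := fun x hx => hfe x (hG' hx)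
  obtain ⟨z, hzc, hzz, hmem⟩ := sq_decomp hF hp hfc hfe u
  obtain ⟨y, hy, hyz⟩ : ∃ y, y ∈ comI F G ∧ u * u = y + z :=
    ⟨u * u + z, hmem, by rw [add_assoc, char2_add_self hF z, add_zero]⟩
  have h4 : u ^ 4 = (u * u) * (u * u) := by
    rw [show (4 : ℕ) = 2 * 2 from rfl, pow_mul, sq, sq]
  rw [h4, hyz]
  calc (y + z) * (y + z) = y * y + (z * y + y * z) + z * z := by
        rw [mul_add, add_mul, add_mul]; abel
    _ = 1 := by
        rw [comI_sq_zero hF hcc hsqc hcard hy, hzc y, char2_add_self hF (y * z),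
          hzz, hu, one_pow, map_one]
        simp
end
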